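/- Let C ⊆ F_q^n be a k-dimensional MDS code with the Hamming metric. Then there exists t ≥ 1 such that α_i^t(C) = n - i + 1 for all 1 ≤ i ≤ k; that is, over a suitable extension field F_{q^t}, the extended code C ⊗ F_{q^t} contains a full chain of MDS subcodes of every dimension i ≤ k. -/

import Mathlib

open Module

/-- Hamming weight of a vector. -/
noncomputable def hwt {ι α : Type*} [Zero α] (x : ι → α) : ℕ := {i | x i ≠ 0}.ncard

/-- Minimum distance (minimum weight of a nonzero element) of a code `D`. -/
noncomputable def dminN {𝔽 V : Type*} [Field 𝔽] [AddCommGroup V] [Module 𝔽 V]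
    (wt : V → ℕ) (D : Submodule 𝔽 V) : ℕ :=
  sInf (wt '' {v : V | v ∈ D ∧ v ≠ 0})

/-- The `i`-th code distance of a code `C`: for `i ≤ dim C` the largest minimum distance of
an `i`-dimensional subcode of `C`, and for `i ≥ dim C` the largest minimum distance of an
`i`-dimensional supercode of `C` (both notions agree at `i = dim C`). -/
noncomputable def alphaN {𝔽 V : Type*} [Field 𝔽] [AddCommGroup V] [Module 𝔽 V]
    (wt : V → ℕ) (C : Submodule 𝔽 V) (i : ℕ) : ℕ :=
  if i ≤ finrank 𝔽 C then
    sSup (dminN wt '' {D : Submodule 𝔽 V | D ≤ C ∧ finrank 𝔽 D = i})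
  else
    sSup (dminN wt '' {D : Submodule 𝔽 V | C ≤ D ∧ finrank 𝔽 D = i})

section Basic
variable {K : Type} [Field K] {n : ℕ}

lemma dminN_le_hwt {D : Submodule K (Fin n → K)} {x : Fin n → K} (hx : x ∈ D) (h0 : x ≠ 0) :
    dminN hwt D ≤ hwt x := Nat.sInf_le ⟨x, ⟨hx, h0⟩, rfl⟩

lemma exists_min_word {D : Submodule K (Fin n → K)} (h : ∃ x ∈ D, x ≠ 0) :
    ∃ x ∈ D, x ≠ 0 ∧ hwt x = dminN hwt D := by
  obtain ⟨x, hx, h0⟩ := h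
  have hne : (hwt '' {v : Fin n → K | v ∈ D ∧ v ≠ 0}).Nonempty := ⟨hwt x, ⟨x, ⟨hx, h0⟩, rfl⟩⟩
  obtain ⟨y, hy, hyw⟩ := Nat.sInf_mem hne
  exact ⟨y, hy.1, hy.2, hyw⟩

lemma ncard_lt_set (m : ℕ) (hm : m ≤ n) : {j : Fin n | (j : ℕ) < m}.ncard = m := by
  have : {j : Fin n | (j : ℕ) < m} = Set.range (Fin.castLE hm) := by
    ext j
    simp only [Set.mem_setOf_eq, Set.mem_range]
    constructor
    · intro h; exact ⟨⟨j, h⟩, by ext; simp⟩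
    · rintro ⟨j', rfl⟩; exact j'.2
  rw [this, ← Set.image_univ, Set.ncard_image_of_injective _ (Fin.castLE_injective hm)]
  simp [Set.ncard_univ]

/-- If a vector vanishes on a set of `m` coordinates, its weight is at most `n - m`. -/
lemma hwt_le_of_zero_on {x : Fin n → K} {S : Set (Fin n)} (hS : S.ncard = m)
    (hz : ∀ j ∈ S, x j = 0) : hwt x ≤ n - m := by
  have hsub : {j | x j ≠ 0} ⊆ Sᶜ := fun j hj hjS => hj (hz j hjS)
  have h1 : hwt x ≤ Sᶜ.ncard := Set.ncard_le_ncard hsub (Set.toFinite _)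
  have h2 : S.ncard + Sᶜ.ncard = n := by
    rw [Set.ncard_add_ncard_compl]; simp
  omega

/-- Singleton bound, existential form. -/
lemma singleton_word (D : Submodule K (Fin n → K)) {i : ℕ} (h1 : 1 ≤ i) (hin : i ≤ n)
    (hD : i ≤ finrank K D) : ∃ x ∈ D, x ≠ 0 ∧ hwt x ≤ n - i + 1 := by
  have : FiniteDimensional K D := FiniteDimensional.finiteDimensional_submodule D
  set f : D →ₗ[K] (Fin (i-1) → K) :=
    (LinearMap.funLeft K K (Fin.castLE (by omega))).comp D.subtype with hf
  have hrn := LinearMap.finrank_range_add_finrank_ker f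
  have hrange : finrank K (LinearMap.range f) ≤ i - 1 := by
    have := Submodule.finrank_le (LinearMap.range f)
    simpa using this
  have hker : 0 < finrank K (LinearMap.ker f) := by omega
  have hkbot : LinearMap.ker f ≠ ⊥ := by
    intro h
    rw [h, finrank_bot] at hker; omega
  obtain ⟨y, hy, hy0⟩ := Submodule.exists_mem_ne_zero_of_ne_bot hkbot
  refine ⟨(y : Fin n → K), y.2, ?_, ?_⟩
  · simpa using hy0
  · have hz : ∀ j ∈ {j : Fin n | (j : ℕ) < i - 1}, (y : Fin n → K) j = 0 := by
      intro j hj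
      have : f y = 0 := hy
      have := congrFun this ⟨(j : ℕ), hj⟩
      simpa [hf, LinearMap.funLeft, Fin.castLE] using this
    have := hwt_le_of_zero_on (ncard_lt_set (i-1) (by omega)) hz
    omega

end Basic

section Descent
variable {K : Type} [Field K] {n m : ℕ}

lemma dependent_of_vanish {D : Submodule K (Fin n → K)}
    (hd : dminN hwt D = n - m + 1) {S : Set (Fin n)} (hS : S.ncard = m - 1) (hm1 : 1 ≤ m)
    {x y : Fin n → K} (hx : x ∈ D) (hy : y ∈ D) (hx0 : x ≠ 0)
    (hxS : ∀ j ∈ S, x j = 0) (hyS : ∀ j ∈ S, y j = 0) : ∃ c : K, y = c • x := by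
  obtain ⟨j0, hj0⟩ : ∃ j0, x j0 ≠ 0 := Function.ne_iff.mp hx0
  have hj0S : j0 ∉ S := fun h => hj0 (hxS j0 h)
  set z : Fin n → K := x j0 • y - y j0 • x with hzdef
  have hz : z ∈ D := D.sub_mem (D.smul_mem _ hy) (D.smul_mem _ hx)
  have hzS : ∀ j ∈ insert j0 S, z j = 0 := by
    intro j hj
    rcases Set.mem_insert_iff.mp hj with h | h
    · simp [hzdef, h, mul_comm]
    · simp [hzdef, hxS j h, hyS j h]
  have hcard : (insert j0 S).ncard = m := by
    rw [Set.ncard_insert_of_notMem hj0S (Set.toFinite _)]; omega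
  have hzw : hwt z ≤ n - m := hwt_le_of_zero_on hcard hzS
  have hz0 : z = 0 := by
    by_contra h
    have := dminN_le_hwt hz h
    omega
  have heq : x j0 • y = y j0 • x := by
    have := sub_eq_zero.mp hz0
    linear_combination (norm := module) this
  refine ⟨(x j0)⁻¹ * y j0, ?_⟩
  rw [mul_smul, ← heq, smul_smul, inv_mul_cancel₀ hj0, one_smul]

lemma descent [Fintype K] (hcard : 2^n < Fintype.card K)
    (D : Submodule K (Fin n → K)) (hm2 : 2 ≤ m) (hmn : m ≤ n) (hfr : finrank K D = m)
    (hd : dminN hwt D = n - m + 1) :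
    ∃ E, E ≤ D ∧ finrank K E = m - 1 ∧ dminN hwt E = n - (m-1) + 1 := by
  classical
  have hfd : FiniteDimensional K D := FiniteDimensional.finiteDimensional_submodule D
  let b : Basis (Fin m) K D := Module.finBasisOfFinrankEq K D hfr
  set Bad : Set (Fin n → K) := {x | x ∈ D ∧ x ≠ 0 ∧ hwt x ≤ n - m + 1} with hBad
  -- every Bad word vanishes on some (m-1)-element Finset
  have exS : ∀ x ∈ Bad, ∃ S : Finset (Fin n), S.card = m - 1 ∧ ∀ j ∈ S, x j = 0 := by
    rintro x ⟨hxD, hx0, hxw⟩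
    have h1 : {j | x j ≠ 0}.ncard + {j | x j = 0}.ncard = n := by
      have := Set.ncard_add_ncard_compl {j : Fin n | x j ≠ 0} (Set.toFinite _)
      simpa [Set.compl_setOf] using this
    have hz : m - 1 ≤ {j | x j = 0}.ncard := by
      have : hwt x = {j | x j ≠ 0}.ncard := rfl
      omega
    obtain ⟨T, hTsub, hTcard⟩ := Set.exists_subset_card_eq hz
    have hTfin : T.Finite := Set.toFinite _
    refine ⟨hTfin.toFinset, ?_, ?_⟩
    · rw [← Set.ncard_eq_toFinset_card T hTfin]; exact hTcard
    · intro j hj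
      exact hTsub (hTfin.mem_toFinset.mp hj)
  -- choice of a representative bad word vanishing on S, as an element of D
  let P : Finset (Fin n) → Prop := fun S => ∃ u : D, (u : Fin n → K) ∈ Bad ∧ ∀ j ∈ S, (u : Fin n → K) j = 0
  let vv : Finset (Fin n) → D := fun S => if h : P S then h.choose else 0
  have hvv : ∀ S, P S → ((vv S : Fin n → K) ∈ Bad ∧ ∀ j ∈ S, (vv S : Fin n → K) j = 0) := by
    intro S h
    simp only [vv, dif_pos h]
    exact h.choose_spec
  set 𝒮 : Finset (Finset (Fin n)) := Finset.univ.filter (fun S => S.card = m - 1 ∧ P S) with h𝒮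
  -- counting
  let Au : D → Finset (Fin m → K) := fun u => Finset.univ.filter (fun g => ∑ j, g j * b.repr u j = 0)
  have card_Au : ∀ u : D, u ≠ 0 → (Au u).card ≤ Fintype.card K ^ (m - 1) := by
    intro u hu
    have hru : b.repr u ≠ 0 := fun h => hu (by simpa using congrArg b.repr.symm h)
    obtain ⟨j0, hj0⟩ : ∃ j0, b.repr u j0 ≠ 0 := by
      by_contra h
      push_neg at h
      exact hru (Finsupp.ext h)
    have hinj : Set.InjOn (fun (g : Fin m → K) => (fun j : {j : Fin m // j ≠ j0} => g j)) (Au u) := by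
      intro g hg g' hg' hgg
      have hge : ∑ j, g j * b.repr u j = 0 := (Finset.mem_filter.mp hg).2
      have hge' : ∑ j, g' j * b.repr u j = 0 := (Finset.mem_filter.mp hg').2
      have hrest : ∀ j : Fin m, j ≠ j0 → g j = g' j := fun j hj => congrFun hgg ⟨j, hj⟩
      have e1 : g j0 * b.repr u j0 + ∑ i ∈ Finset.univ.erase j0, g i * b.repr u i = 0 := by
        rw [Finset.add_sum_erase Finset.univ (fun i => g i * b.repr u i) (Finset.mem_univ j0)]; exact hge
      have e2 : g' j0 * b.repr u j0 + ∑ i ∈ Finset.univ.erase j0, g' i * b.repr u i = 0 := by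
        rw [Finset.add_sum_erase Finset.univ (fun i => g' i * b.repr u i) (Finset.mem_univ j0)]; exact hge'
      have esum : ∑ i ∈ Finset.univ.erase j0, g i * b.repr u i
          = ∑ i ∈ Finset.univ.erase j0, g' i * b.repr u i :=
        Finset.sum_congr rfl (fun i hi => by rw [hrest i (Finset.ne_of_mem_erase hi)])
      have hj0eq : g j0 = g' j0 := by
        rw [esum] at e1
        have := add_right_cancel (e1.trans e2.symm)
        exact mul_right_cancel₀ hj0 this
      funext j
      by_cases hj : j = j0
      · rw [hj]; exact hj0eq
      · exact hrest j hj
    have hle := Finset.card_le_card_of_injOn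
      (fun (g : Fin m → K) => (fun j : {j : Fin m // j ≠ j0} => g j))
      (fun g _ => Finset.mem_univ _) hinj
    calc (Au u).card ≤ (Finset.univ : Finset ({j : Fin m // j ≠ j0} → K)).card := hle
      _ = Fintype.card K ^ (m - 1) := by
          rw [Finset.card_univ, Fintype.card_fun]
          congr 1
          rw [Fintype.card_subtype_compl, Fintype.card_subtype_eq]
          simp
  -- the union of bad coefficient vectors
  set badF : Finset (Fin m → K) := 𝒮.biUnion (fun S => Au (vv S)) with hbadF
  have hvv0 : ∀ S ∈ 𝒮, vv S ≠ 0 := by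
    intro S hS h
    have hPS : P S := (Finset.mem_filter.mp hS).2.2
    have hmem := (hvv S hPS).1
    rw [h] at hmem
    exact hmem.2.1 (ZeroMemClass.coe_zero _)
  have hcard𝒮 : 𝒮.card ≤ 2^n := by
    calc 𝒮.card ≤ (Finset.univ : Finset (Finset (Fin n))).card :=
          Finset.card_le_card (Finset.filter_subset _ _)
      _ = 2^n := by rw [Finset.card_univ, Fintype.card_finset, Fintype.card_fin]
  have hbadcard : badF.card < Fintype.card (Fin m → K) := by
    have h1 : badF.card ≤ 𝒮.card * Fintype.card K ^ (m-1) := by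
      calc badF.card ≤ ∑ S ∈ 𝒮, (Au (vv S)).card := Finset.card_biUnion_le
        _ ≤ ∑ _S ∈ 𝒮, Fintype.card K ^ (m-1) :=
            Finset.sum_le_sum (fun S hS => card_Au _ (hvv0 S hS))
        _ = 𝒮.card * Fintype.card K ^ (m-1) := by rw [Finset.sum_const, smul_eq_mul]
    have h2 : Fintype.card (Fin m → K) = Fintype.card K ^ m := by
      rw [Fintype.card_fun, Fintype.card_fin]
    have h3 : Fintype.card K ^ m = Fintype.card K * Fintype.card K ^ (m-1) := by
      rw [← pow_succ']
      congr 1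
      omega
    have hposp : 0 < Fintype.card K ^ (m-1) := pow_pos Fintype.card_pos _
    have h4 : 𝒮.card * Fintype.card K ^ (m-1) < Fintype.card K * Fintype.card K ^ (m-1) := by
      have : 𝒮.card < Fintype.card K := by omega
      exact Nat.mul_lt_mul_of_lt_of_le this (le_refl _) hposp
    omega
  obtain ⟨g, hg⟩ : ∃ g : Fin m → K, g ∉ badF := by
    by_contra h
    push_neg at h
    have hsub : (Finset.univ : Finset (Fin m → K)) ⊆ badF := fun g _ => h g
    have := Finset.card_le_card hsub
    rw [Finset.card_univ] at this
    omega
  have hgood : ∀ S ∈ 𝒮, ∑ j, g j * b.repr (vv S) j ≠ 0 := by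
    intro S hS h
    exact hg (Finset.mem_biUnion.mpr ⟨S, hS, Finset.mem_filter.mpr ⟨Finset.mem_univ _, h⟩⟩)
  set f : D →ₗ[K] K := ∑ j, g j • (b.coord j) with hfdef
  have hfapp : ∀ u : D, f u = ∑ j, g j * b.repr u j := by
    intro u
    simp [hfdef, Basis.coord_apply]
  have badstruct : ∀ x ∈ Bad, ∃ S ∈ 𝒮, ∃ c : K, c ≠ 0 ∧ x = c • (vv S : Fin n → K) := by
    intro x hx
    obtain ⟨S, hScard, hSz⟩ := exS x hx
    have hPS : P S := ⟨⟨x, hx.1⟩, hx, hSz⟩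
    have hS𝒮 : S ∈ 𝒮 := Finset.mem_filter.mpr ⟨Finset.mem_univ _, hScard, hPS⟩
    obtain ⟨hvB, hvz⟩ := hvv S hPS
    obtain ⟨c, hc⟩ := dependent_of_vanish (m := m) hd (S := (S : Set (Fin n)))
      (by rw [Set.ncard_coe_finset]; exact hScard) (by omega)
      (vv S).2 hx.1 hvB.2.1 (fun j hj => hvz j hj) (fun j hj => hSz j hj)
    refine ⟨S, hS𝒮, c, ?_, hc⟩
    intro h0
    rw [h0, zero_smul] at hc
    exact hx.2.1 hc
  have fBad : ∀ u : D, (u : Fin n → K) ∈ Bad → f u ≠ 0 := by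
    intro u hu
    obtain ⟨S, hS, c, hc0, hc⟩ := badstruct _ hu
    have hueq : u = c • vv S := Subtype.ext (by rw [Submodule.coe_smul]; exact hc)
    rw [hueq, map_smul, smul_eq_mul, hfapp]
    exact mul_ne_zero hc0 (hgood S hS)
  have hDbot : D ≠ ⊥ := by
    intro h
    rw [h, finrank_bot] at hfr
    omega
  obtain ⟨x0, hx0D, hx00, hx0w⟩ := exists_min_word (Submodule.exists_mem_ne_zero_of_ne_bot hDbot)
  have hx0B : x0 ∈ Bad := ⟨hx0D, hx00, le_of_eq (hx0w.trans hd)⟩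
  have hf0 : f ⟨x0, hx0D⟩ ≠ 0 := fBad _ hx0B
  have hker : finrank K (LinearMap.ker f) = m - 1 := by
    have hrn := LinearMap.finrank_range_add_finrank_ker f
    have hr1 : finrank K (LinearMap.range f) = 1 := by
      have hle : finrank K (LinearMap.range f) ≤ 1 := by
        have := Submodule.finrank_le (LinearMap.range f)
        simpa using this
      have hne : LinearMap.range f ≠ ⊥ := by
        intro h
        apply hf0
        have hmem : f ⟨x0, hx0D⟩ ∈ LinearMap.range f := LinearMap.mem_range_self _ _
        rw [h] at hmem
        exact (Submodule.mem_bot K).mp hmem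
      have hpos : 0 < finrank K (LinearMap.range f) := by
        rcases Nat.eq_zero_or_pos (finrank K (LinearMap.range f)) with h | h
        · exact absurd (Submodule.finrank_eq_zero.mp h) hne
        · exact h
      omega
    omega
  refine ⟨(LinearMap.ker f).map D.subtype, Submodule.map_subtype_le _ _, ?_, ?_⟩
  · rw [Submodule.finrank_map_subtype_eq]
    exact hker
  · have hup : ∃ x ∈ (LinearMap.ker f).map D.subtype, x ≠ 0 ∧ hwt x ≤ n - (m-1) + 1 := by
      apply singleton_word (i := m - 1) _ (by omega) (by omega)
      rw [Submodule.finrank_map_subtype_eq, hker]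
    have hlow : ∀ x ∈ (LinearMap.ker f).map D.subtype, x ≠ 0 → n - (m-1) + 1 ≤ hwt x := by
      rintro x ⟨u, hu, rfl⟩ hx0
      by_contra hlt
      push_neg at hlt
      have hlt' : hwt ((u : Fin n → K)) < n - (m-1) + 1 := hlt
      have hxB : (u : Fin n → K) ∈ Bad := ⟨u.2, hx0, by omega⟩
      exact fBad u hxB (LinearMap.mem_ker.mp hu)
    obtain ⟨x1, hx1, hx10, hx1w⟩ := hup
    obtain ⟨y, hy, hy0, hyw⟩ := exists_min_word ⟨x1, hx1, hx10⟩
    have h1 : dminN hwt ((LinearMap.ker f).map D.subtype) ≤ n - (m-1) + 1 :=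
      le_trans (dminN_le_hwt hx1 hx10) hx1w
    have h2 := hlow y hy hy0
    omega

end Descent

section Chain
variable {K : Type} [Field K] {n : ℕ}

lemma chain [Fintype K] (hcard : 2^n < Fintype.card K) :
    ∀ kk : ℕ, ∀ CK : Submodule K (Fin n → K), finrank K CK = kk → kk ≤ n →
      dminN hwt CK = n - kk + 1 →
      ∀ i, 1 ≤ i → i ≤ kk → ∃ D, D ≤ CK ∧ finrank K D = i ∧ dminN hwt D = n - i + 1 := by
  intro kk
  induction kk with
  | zero => intro CK _ _ _ i h1 h2; omega
  | succ kk ih =>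
    intro CK hfr hkn hd i h1 h2
    by_cases hik : i = kk + 1
    · exact ⟨CK, le_refl _, by rw [hfr, hik], by rw [hd, hik]⟩
    · obtain ⟨E, hE, hEfr, hEd⟩ := descent hcard CK (by omega) hkn hfr hd
      have h1' : kk + 1 - 1 = kk := by omega
      rw [h1'] at hEfr hEd
      obtain ⟨D, hD, hDfr, hDd⟩ := ih E hEfr (by omega) hEd i h1 (by omega)
      exact ⟨D, le_trans hD hE, hDfr, hDd⟩

end Chain

section Extension
variable {𝔽 K : Type} [Field 𝔽] [Field K] [Algebra 𝔽 K] {t n : ℕ}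

lemma span_ext_mem (β : Basis (Fin t) 𝔽 K) (C : Submodule 𝔽 (Fin n → 𝔽)) (x : Fin n → K)
    (hx : x ∈ Submodule.span K
      ((fun (v : Fin n → 𝔽) (j : Fin n) => algebraMap 𝔽 K (v j)) '' (C : Set (Fin n → 𝔽))))
    (l : Fin t) : (fun i => β.repr (x i) l) ∈ C := by
  let P : Submodule K (Fin n → K) :=
    { carrier := {x | ∀ l, (fun i => β.repr (x i) l) ∈ C}
      add_mem' := by
        intro a b ha hb l
        have h : (fun i => β.repr ((a + b) i) l)
            = (fun i => β.repr (a i) l) + (fun i => β.repr (b i) l) := by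
          funext i; simp
        rw [h]
        exact C.add_mem (ha l) (hb l)
      zero_mem' := by
        intro l
        have h : (fun i => β.repr ((0 : Fin n → K) i) l) = 0 := by funext i; simp
        rw [h]
        exact C.zero_mem
      smul_mem' := by
        intro c a ha l
        have key : (fun i => β.repr ((c • a) i) l)
            = ∑ m : Fin t, (β.repr (c * β m) l) • (fun i => β.repr (a i) m) := by
          funext i
          rw [Finset.sum_apply]
          simp only [Pi.smul_apply, smul_eq_mul]
          have h1 : c * a i = ∑ m : Fin t, β.repr (a i) m • (c * β m) := by
            conv_lhs => rw [← Basis.sum_repr β (a i)]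
            rw [Finset.mul_sum]
            exact Finset.sum_congr rfl (fun m _ => mul_smul_comm ((β.repr (a i)) m) c (β m))
          rw [h1, map_sum, Finset.sum_apply']
          refine Finset.sum_congr rfl (fun m _ => ?_)
          rw [map_smul, Finsupp.smul_apply, smul_eq_mul]
          ring
        rw [key]
        exact Submodule.sum_mem _ (fun m _ => C.smul_mem _ (ha m)) }
  have hsub : (fun (v : Fin n → 𝔽) (j : Fin n) => algebraMap 𝔽 K (v j)) '' (C : Set (Fin n → 𝔽))
      ⊆ (P : Set (Fin n → K)) := by
    rintro _ ⟨v, hv, rfl⟩ l'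
    have h : (fun i => β.repr (algebraMap 𝔽 K (v i)) l') = (β.repr 1 l') • v := by
      funext i
      rw [Algebra.algebraMap_eq_smul_one, map_smul, Finsupp.smul_apply, smul_eq_mul]
      simp [mul_comm]
    rw [h]
    exact C.smul_mem _ hv
  exact (Submodule.span_le.mpr hsub) hx l

end Extension

/-- Let `C ⊆ 𝔽_q^n` be a `k`-dimensional MDS code (Hamming metric). Then there exists
`t ≥ 1` such that, over any degree-`t` field extension `K = 𝔽_{q^t}` of `𝔽_q`, the extended
code `C ⊗ 𝔽_{q^t}` satisfies `α_i^t(C) = n - i + 1` for all `1 ≤ i ≤ k`; i.e. it contains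
a full chain of MDS subcodes of every dimension `i ≤ k`. -/
theorem exists_extension_with_MDS_chain {𝔽 : Type} [Field 𝔽] [Fintype 𝔽] {n k : ℕ}
    (C : Submodule 𝔽 (Fin n → 𝔽)) (hC : C ≠ ⊥) (hk : finrank 𝔽 C = k) (hkn : k ≤ n)
    (hMDS : dminN hwt C = n - k + 1) :
    ∃ t : ℕ, 1 ≤ t ∧ ∀ (K : Type) [Field K] [Algebra 𝔽 K], finrank 𝔽 K = t →
      ∀ i, 1 ≤ i → i ≤ k →
        alphaN hwt (Submodule.span K
            {x : Fin n → K | ∃ v ∈ C, ∀ j, x j = algebraMap 𝔽 K (v j)}) i = n - i + 1 := by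
  classical
  refine ⟨n + 1, by omega, ?_⟩
  intro K _ _ hK i h1i hik
  have hfin : Module.Finite 𝔽 K := Module.finite_of_finrank_eq_succ hK
  let β : Basis (Fin (n+1)) 𝔽 K := Module.finBasisOfFinrankEq 𝔽 K hK
  letI : Fintype K := Module.fintypeOfFintype β
  have hcardK : Fintype.card K = Fintype.card 𝔽 ^ (n+1) := by
    have := card_eq_pow_finrank (K := 𝔽) (V := K)
    rwa [hK] at this
  have hq : 2 ≤ Fintype.card 𝔽 := Fintype.one_lt_card
  have hcard : 2^n < Fintype.card K := by
    have h1 : (2:ℕ)^(n+1) ≤ Fintype.card 𝔽 ^ (n+1) := Nat.pow_le_pow_left hq _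
    have h2 : (2:ℕ)^n < 2^(n+1) := by
      have : (2:ℕ)^(n+1) = 2 * 2^n := by ring
      have hp : 0 < (2:ℕ)^n := Nat.pow_pos (by omega)
      omega
    omega
  set e : (Fin n → 𝔽) → (Fin n → K) := fun v j => algebraMap 𝔽 K (v j) with he
  have hset : {x : Fin n → K | ∃ v ∈ C, ∀ j, x j = algebraMap 𝔽 K (v j)}
      = e '' (C : Set (Fin n → 𝔽)) := by
    ext x
    constructor
    · rintro ⟨v, hv, hx⟩
      exact ⟨v, hv, (funext fun j => (hx j).symm)⟩
    · rintro ⟨v, hv, rfl⟩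
      exact ⟨v, hv, fun j => rfl⟩
  rw [hset]
  set CK := Submodule.span K (e '' (C : Set (Fin n → 𝔽))) with hCK
  have comp_mem : ∀ x ∈ CK, ∀ l, (fun i' => β.repr (x i') l) ∈ C :=
    fun x hx l => span_ext_mem β C x hx l
  have he_mem : ∀ v ∈ C, e v ∈ CK := fun v hv => Submodule.subset_span ⟨v, hv, rfl⟩
  have halg : Function.Injective (algebraMap 𝔽 K) := RingHom.injective _
  have he_wt : ∀ v : Fin n → 𝔽, hwt (e v) = hwt v := by
    intro v
    unfold hwt
    congr 1
    ext j
    simp only [he, Set.mem_setOf_eq, ne_eq]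
    rw [show ((algebraMap 𝔽 K) (v j) = 0 ↔ v j = 0) from
      ⟨fun h => halg (by simpa using h), fun h => by rw [h]; simp⟩]
  have he_inj0 : ∀ v : Fin n → 𝔽, v ≠ 0 → e v ≠ 0 := by
    intro v hv h
    apply hv
    funext j
    have := congrFun h j
    simp only [he, Pi.zero_apply] at this ⊢
    exact halg (by simpa using this)
  have hCKlow : ∀ x ∈ CK, x ≠ 0 → n - k + 1 ≤ hwt x := by
    intro x hx hx0
    obtain ⟨l, hl⟩ : ∃ l, (fun i' => β.repr (x i') l) ≠ (0 : Fin n → 𝔽) := by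
      by_contra h
      push_neg at h
      apply hx0
      funext i'
      have hrz : β.repr (x i') = 0 := by
        ext l
        have := congrFun (h l) i'
        simpa using this
      have := congrArg β.repr.symm hrz
      simpa using this
    have hyC := comp_mem x hx l
    have hsub : {i' | (β.repr (x i')) l ≠ 0} ⊆ {i' | x i' ≠ 0} := by
      intro i' hi' h0
      exact hi' (by rw [h0]; simp)
    have hw1 : hwt (fun i' => β.repr (x i') l) ≤ hwt x :=
      Set.ncard_le_ncard hsub (Set.toFinite _)
    have hw2 : dminN hwt C ≤ hwt (fun i' => β.repr (x i') l) := dminN_le_hwt hyC hl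
    omega
  have hCKd : dminN hwt CK = n - k + 1 := by
    obtain ⟨w, hwC, hw0, hww⟩ := exists_min_word (Submodule.exists_mem_ne_zero_of_ne_bot hC)
    have h1 : dminN hwt CK ≤ n - k + 1 := by
      have h2 := dminN_le_hwt (he_mem w hwC) (he_inj0 w hw0)
      rw [he_wt, hww, hMDS] at h2
      exact h2
    obtain ⟨y, hy, hy0, _⟩ := exists_min_word ⟨e w, he_mem w hwC, he_inj0 w hw0⟩
    have h2 := hCKlow y hy hy0
    have h3 := dminN_le_hwt hy hy0
    omega
  have hCKfr : finrank K CK = k := by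
    have : Module.Finite 𝔽 C := inferInstance
    let bC : Basis (Fin k) 𝔽 C := Module.finBasisOfFinrankEq 𝔽 C hk
    let w : Fin k → (Fin n → K) := fun j => e (bC j)
    have hspan : Submodule.span K (Set.range w) = CK := by
      apply le_antisymm
      · rw [Submodule.span_le]
        rintro _ ⟨j, rfl⟩
        exact he_mem _ (bC j).2
      · rw [hCK, Submodule.span_le]
        rintro _ ⟨v, hv, rfl⟩
        have hv' : (⟨v, hv⟩ : C) = ∑ j, bC.repr ⟨v, hv⟩ j • bC j := (Basis.sum_repr bC _).symm
        have hvamb : v = ∑ j, bC.repr ⟨v, hv⟩ j • (bC j : Fin n → 𝔽) := by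
          have := congrArg Subtype.val hv'
          simpa only [Submodule.coe_smul, Submodule.coe_sum] using this
        have hev : e v = ∑ j, algebraMap 𝔽 K (bC.repr ⟨v, hv⟩ j) • w j := by
          funext i'
          rw [Finset.sum_apply]
          have hvi : v i' = ∑ j, bC.repr ⟨v, hv⟩ j * ((bC j : Fin n → 𝔽) i') := by
            have h' := congrFun hvamb i'
            rw [Finset.sum_apply] at h'
            simpa using h'
          simp only [he, w, Pi.smul_apply, smul_eq_mul]
          rw [hvi, map_sum]
          exact Finset.sum_congr rfl (fun j _ => by rw [map_mul])
        rw [hev]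
        exact Submodule.sum_mem _
          (fun j _ => Submodule.smul_mem _ _ (Submodule.subset_span ⟨j, rfl⟩))
    have hind : LinearIndependent K w := by
      rw [Fintype.linearIndependent_iff]
      intro g hg j
      have hamb : LinearIndependent 𝔽 (fun j' => (bC j' : Fin n → 𝔽)) :=
        bC.linearIndependent.map' C.subtype (Submodule.ker_subtype C)
      have hcomp : ∀ l, ∀ j', β.repr (g j') l = 0 := by
        intro l
        have hzero : ∑ j', β.repr (g j') l • (bC j' : Fin n → 𝔽) = 0 := by
          funext i'
          rw [Finset.sum_apply]
          have hgi := congrFun hg i'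
          rw [Finset.sum_apply] at hgi
          simp only [Pi.smul_apply, smul_eq_mul, Pi.zero_apply] at hgi ⊢
          have hterm : ∀ j', g j' * (w j') i' = ((bC j' : Fin n → 𝔽) i') • g j' := by
            intro j'
            simp only [w, he]
            rw [Algebra.smul_def, mul_comm]
          rw [show (∑ j', g j' * (w j') i') = ∑ j', ((bC j' : Fin n → 𝔽) i') • g j' from
            Finset.sum_congr rfl (fun j' _ => hterm j')] at hgi
          have := congrArg (fun z => β.repr z l) hgi
          simp only [map_sum, Finset.sum_apply', map_smul, Finsupp.smul_apply,
            smul_eq_mul, map_zero, Finsupp.coe_zero, Pi.zero_apply] at this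
          rw [← this]
          exact Finset.sum_congr rfl (fun j' _ => mul_comm _ _)
        exact Fintype.linearIndependent_iff.mp hamb _ hzero
      have hgr : β.repr (g j) = 0 := by
        ext l
        simpa using hcomp l j
      exact (LinearEquiv.map_eq_zero_iff β.repr).mp hgr
    rw [← hspan, finrank_span_eq_card hind, Fintype.card_fin]
  obtain ⟨D, hD, hDfr, hDd⟩ := chain hcard k CK hCKfr hkn hCKd i h1i hik
  have hbound : ∀ a ∈ dminN hwt '' {D' : Submodule K (Fin n → K) | D' ≤ CK ∧ finrank K D' = i},
      a ≤ n - i + 1 := by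
    rintro a ⟨D', ⟨_, hD'fr⟩, rfl⟩
    obtain ⟨x, hx, hx0, hxw⟩ := singleton_word (i := i) D' h1i (by omega) (le_of_eq hD'fr.symm)
    exact le_trans (dminN_le_hwt hx hx0) hxw
  have hmem : (n - i + 1) ∈ dminN hwt ''
      {D' : Submodule K (Fin n → K) | D' ≤ CK ∧ finrank K D' = i} := ⟨D, ⟨hD, hDfr⟩, hDd⟩
  unfold alphaN
  rw [if_pos (by rw [hCKfr]; exact hik)]
  exact le_antisymm (csSup_le ⟨n - i + 1, hmem⟩ hbound) (le_csSup ⟨n - i + 1, hbound⟩ hmem)
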